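/- Let (x_n)_{n∈ℤ} be a (1,4)-sequence. Then for every integer n ≥ 0, x_{2n+2} = Σ_{q,ℓ,r,s,m ≥ 0} x_2^{1+2n−4(q+ℓ+r+s)}·x_1^{q+ℓ+m−n}·C(n−q−ℓ; q−r, r, s)·C(q+ℓ−1, ℓ)·C(2r+s+ℓ, m), where the exponents are integers (integer powers of the positive reals x_1, x_2) and the binomial and multinomial conventions below are used (only finitely many terms are nonzero). -/

import Mathlib

/-- Binomial convention: C(a,b) = a!/(b!(a−b)!) if 0 ≤ b ≤ a, C(−1,0) = 1,
and C(a,b) = 0 otherwise. -/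
def intChoose (a b : ℤ) : ℤ :=
  if 0 ≤ b ∧ b ≤ a then Nat.choose a.toNat b.toNat
  else if a = -1 ∧ b = 0 then 1 else 0

/-- Multinomial convention: C(n; m_1,…,m_k) = n!/(m_1!⋯m_k!(n−Σm_j)!) if all
m_j ≥ 0 and Σ m_j ≤ n, C(−1; 0,…,0) = 1, and 0 otherwise. -/
def intMultinomial (n : ℤ) (ms : List ℤ) : ℤ :=
  if (∀ a ∈ ms, 0 ≤ a) ∧ ms.sum ≤ n then
    (Nat.factorial n.toNat /
      ((ms.map fun a => Nat.factorial a.toNat).prod *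
        Nat.factorial (n - ms.sum).toNat) : ℕ)
  else if n = -1 ∧ ∀ a ∈ ms, a = 0 then 1 else 0

def tri (N a b c : ℕ) : ℕ := N.choose a * (N-a).choose b * (N-a-b).choose c
def triG (n q l r s : ℕ) : ℕ := if r ≤ q ∧ q + l ≤ n then tri (n-q-l) (q-r) r s else 0
def chG (q l : ℕ) : ℕ := if q = 0 ∧ l = 0 then 1 else (q+l-1).choose l
def chW (q l : ℕ) : ℕ := (q+l).choose l

lemma chz {M k : ℕ} (h : M < k) : ((M.choose k : ℤ)) = 0 := by
  rw [Nat.choose_eq_zero_of_lt h]; rfl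

lemma hchoose (x : ℤ) (M M' b : ℕ) (hM : M = M' + 1 ∨ (M = 0 ∧ M' = 0))
    (hx : M = 0 → x = 0) :
    x * (M.choose (b+1) : ℤ) = x * (M'.choose (b+1) : ℤ) + x * (M'.choose b : ℤ) := by
  rcases hM with h | ⟨h1, h2⟩
  · subst h; rw [Nat.choose_succ_succ']; push_cast; ring
  · rw [hx h1]; ring

lemma cp (M c : ℕ) : ((M+1).choose (c+1) : ℤ) = M.choose (c+1) + M.choose c := by
  rw [Nat.choose_succ_succ']; push_cast; ring

lemma tri_pascal (N a b c : ℕ) :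
    (tri (N+1) a b c : ℤ) = (tri N a b c : ℤ)
      + (if c = 0 then 0 else (tri N a b (c-1) : ℤ))
      + (if a = 0 then 0 else (tri N (a-1) b c : ℤ))
      + (if b = 0 then 0 else (tri N a (b-1) c : ℤ)) := by
  have SIMP : True := trivial
  rcases a with _ | a
  · rcases b with _ | b
    · rcases c with _ | c
      · simp [tri]
      · simp only [tri, Nat.succ_sub_succ, Nat.sub_zero, Nat.choose_zero_right, one_mul,
          mul_one, if_pos rfl, if_neg (Nat.succ_ne_zero _), Nat.succ_sub_one, add_zero, zero_add]
        push_cast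
        linear_combination cp N c
    · rcases c with _ | c
      · simp only [tri, Nat.succ_sub_succ, Nat.sub_zero, Nat.choose_zero_right, one_mul,
          mul_one, if_pos rfl, if_neg (Nat.succ_ne_zero _), Nat.succ_sub_one, add_zero, zero_add]
        push_cast
        linear_combination cp N b
      · simp only [tri, Nat.succ_sub_succ, Nat.sub_zero, Nat.choose_zero_right, one_mul,
          mul_one, if_pos rfl, if_neg (Nat.succ_ne_zero _), Nat.succ_sub_one, add_zero, zero_add]
        push_cast
        have h := hchoose (N.choose (b+1) : ℤ) (N-b) (N-(b+1)) c (by omega)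
          (fun h => chz (by omega))
        linear_combination cp N b * ((N-b).choose (c+1) : ℤ) + h
  · rcases b with _ | b
    · rcases c with _ | c
      · simp only [tri, Nat.succ_sub_succ, Nat.sub_zero, Nat.choose_zero_right, one_mul,
          mul_one, if_pos rfl, if_neg (Nat.succ_ne_zero _), Nat.succ_sub_one, add_zero, zero_add]
        push_cast
        linear_combination cp N a
      · simp only [tri, Nat.succ_sub_succ, Nat.sub_zero, Nat.choose_zero_right, one_mul,
          mul_one, if_pos rfl, if_neg (Nat.succ_ne_zero _), Nat.succ_sub_one, add_zero, zero_add]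
        push_cast
        have h := hchoose (N.choose (a+1) : ℤ) (N-a) (N-(a+1)) c (by omega)
          (fun h => chz (by omega))
        linear_combination cp N a * ((N-a).choose (c+1) : ℤ) + h
    · rcases c with _ | c
      · simp only [tri, Nat.succ_sub_succ, Nat.sub_zero, Nat.choose_zero_right, one_mul,
          mul_one, if_pos rfl, if_neg (Nat.succ_ne_zero _), Nat.succ_sub_one, add_zero, zero_add]
        push_cast
        have h := hchoose (N.choose (a+1) : ℤ) (N-a) (N-(a+1)) b (by omega)
          (fun h => chz (by omega))
        linear_combination cp N a * ((N-a).choose (b+1) : ℤ) + h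
      · simp only [tri, Nat.succ_sub_succ, Nat.sub_zero, Nat.choose_zero_right, one_mul,
          mul_one, if_pos rfl, if_neg (Nat.succ_ne_zero _), Nat.succ_sub_one, add_zero, zero_add]
        push_cast
        have e : N - (a+1) - b = N - a - (b+1) := by omega
        rw [e]
        have h1 := hchoose ((N.choose (a+1) : ℤ) * ((N-a-(b+1)).choose (c+1) : ℤ))
          (N-a) (N-(a+1)) b (by omega)
          (fun h => by rw [chz (show N < a+1 by omega)]; ring)
        have h2 := hchoose ((N.choose (a+1) : ℤ) * ((N-(a+1)).choose (b+1) : ℤ))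
          (N-a-(b+1)) (N-(a+1)-(b+1)) c (by omega)
          (fun h => by rw [chz (show N-(a+1) < b+1 by omega)]; ring)
        linear_combination cp N a * ((N-a).choose (b+1) : ℤ) * ((N-a-(b+1)).choose (c+1) : ℤ) + h1 + h2
section
open Nat

lemma triG_pos {n q l r s : ℕ} (h1 : r ≤ q) (h2 : q + l ≤ n) :
    triG n q l r s = tri (n-q-l) (q-r) r s := if_pos ⟨h1, h2⟩

lemma triG_zero {n q l r s : ℕ} (h : ¬(r ≤ q ∧ q + l ≤ n)) : triG n q l r s = 0 := if_neg h

lemma chGW (q l : ℕ) : chW q l = chG (q+1) l := by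
  simp only [chW, chG, Nat.succ_ne_zero, false_and, if_false, Nat.add_sub_cancel]
  congr 1
  omega

lemma tri_zero_big {N a b c : ℕ} (h : N < a + b + c) : tri N a b c = 0 := by
  rcases Nat.lt_or_ge N a with h1 | h1
  · simp [tri, Nat.choose_eq_zero_of_lt h1]
  rcases Nat.lt_or_ge (N - a) b with h2 | h2
  · simp [tri, Nat.choose_eq_zero_of_lt h2]
  · have : N - a - b < c := by omega
    simp [tri, Nat.choose_eq_zero_of_lt this]

lemma key (n q l r s : ℕ) :
    (triG (n+2) q l r s * chG q l : ℤ) =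
      (triG (n+1) q l r s * chG q l : ℤ)
      + (if s = 0 then 0 else (triG (n+1) q l r (s-1) * chG q l : ℤ))
      + (if q = 0 then 0 else (triG n (q-1) l r s * chW (q-1) l : ℤ))
      + (if q = 0 then 0 else if r = 0 then 0 else (triG n (q-1) l (r-1) s * chW (q-1) l : ℤ)) := by
  by_cases hrq : r ≤ q
  · by_cases hql : q + l ≤ n + 1
    · -- main case
      have hN : n + 2 - q - l = (n + 1 - q - l) + 1 := by omega
      have hp := tri_pascal (n+1-q-l) (q-r) r s
      rw [triG_pos hrq (by omega : q + l ≤ n + 2), hN,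
          triG_pos hrq (by omega : q + l ≤ n + 1),
          triG_pos hrq (by omega : q + l ≤ n + 1)]
      rcases q with _ | Q
      · -- q = 0, r = 0
        interval_cases r
        rcases s with _ | S <;>
        · simp only [Nat.sub_zero, Nat.sub_self, Nat.add_sub_cancel, eq_self_iff_true,
            if_true, Nat.succ_ne_zero, if_false] at hp ⊢
          push_cast
          linear_combination (chG 0 l : ℤ) * hp
      · -- q = Q+1
        rw [if_neg (Nat.succ_ne_zero Q), if_neg (Nat.succ_ne_zero Q)]
        simp only [Nat.add_sub_cancel] at hp ⊢
        simp only [show n+1-(Q+1)-l = n-Q-l from by omega] at hp ⊢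
        rw [chGW]
        rcases r with _ | R
        · -- r = 0
          rw [triG_pos (Nat.zero_le Q) (by omega : Q + l ≤ n)]
          rcases s with _ | S <;>
          · simp only [Nat.sub_zero, Nat.sub_self, Nat.add_sub_cancel, eq_self_iff_true,
              if_true, Nat.succ_ne_zero, if_false] at hp ⊢
            push_cast
            linear_combination (chG (Q+1) l : ℤ) * hp
        · -- r = R+1
          rw [show Q+1-(R+1) = Q-R from by omega] at hp ⊢
          by_cases hQR : R + 1 ≤ Q
          · -- r < q
            rw [triG_pos (show R+1 ≤ Q from by omega) (by omega : Q + l ≤ n),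
                triG_pos (show R+1-1 ≤ Q from by omega) (by omega : Q + l ≤ n),
                show Q - (R+1) = Q - R - 1 from by omega]
            rw [if_neg (show ¬ Q - R = 0 from by omega)] at hp
            rcases s with _ | S <;>
            · simp only [Nat.sub_zero, Nat.sub_self, Nat.add_sub_cancel, eq_self_iff_true,
                if_true, Nat.succ_ne_zero, if_false] at hp ⊢
              push_cast
              linear_combination (chG (Q+1) l : ℤ) * hp
          · -- r = q
            have hRQ : R = Q := by omega
            subst hRQ
            rw [triG_zero (show ¬(R+1 ≤ R ∧ R + l ≤ n) from by omega),
                triG_pos (show R+1-1 ≤ R from by omega) (by omega : R + l ≤ n)]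
            rw [if_pos (show R - R = 0 from by omega)] at hp
            rcases s with _ | S <;>
            · simp only [Nat.sub_zero, Nat.sub_self, Nat.add_sub_cancel, eq_self_iff_true,
                if_true, Nat.succ_ne_zero, if_false] at hp ⊢
              push_cast
              linear_combination (chG (R+1) l : ℤ) * hp
    · -- q + l ≥ n + 2
      have hP1 : ∀ s', triG (n+1) q l r s' = 0 := fun s' => triG_zero (by omega)
      have hLHSz : triG (n+2) q l r s * chG q l = 0 := by
        by_cases hql2 : q + l ≤ n + 2
        · rw [triG_pos hrq hql2, show n + 2 - q - l = 0 from by omega]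
          rcases Nat.eq_zero_or_pos (q - r) with h1 | h1
          · rcases Nat.eq_zero_or_pos r with h2 | h2
            · rcases Nat.eq_zero_or_pos s with h3' | h3'
              · have hq0 : q = 0 := by omega
                have hl : l = n + 2 := by omega
                subst hq0 hl h3' h2
                simp [tri, chG, Nat.choose_eq_zero_of_lt (by omega : n+2-1 < n+2)]
              · rw [tri_zero_big (by omega)]; ring
            · rw [tri_zero_big (by omega)]; ring
          · rw [tri_zero_big (by omega)]; ring
        · rw [triG_zero (fun hh => by omega)]; ring
      have hLHSz' : (triG (n+2) q l r s : ℤ) * (chG q l : ℤ) = 0 := by exact_mod_cast hLHSz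
      rw [hLHSz', hP1 s, hP1 (s-1)]
      rcases q with _ | Q
      · simp
      · rw [if_neg (Nat.succ_ne_zero Q), if_neg (Nat.succ_ne_zero Q),
            triG_zero (show ¬(r ≤ Q+1-1 ∧ (Q+1-1) + l ≤ n) from by omega)]
        rcases r with _ | R
        · simp
        · rw [if_neg (Nat.succ_ne_zero R),
              triG_zero (show ¬(R+1-1 ≤ Q+1-1 ∧ (Q+1-1) + l ≤ n) from by omega)]
          simp
  · -- r > q
    rw [triG_zero (fun h => by omega), triG_zero (fun h => by omega),
        triG_zero (fun h => by omega)]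
    rcases q with _ | Q
    · simp
    · rw [if_neg (Nat.succ_ne_zero Q), if_neg (Nat.succ_ne_zero Q),
          triG_zero (show ¬(r ≤ Q+1-1 ∧ (Q+1-1) + l ≤ n) from by omega)]
      rcases r with _ | R
      · simp
      · rw [if_neg (Nat.succ_ne_zero R),
            triG_zero (show ¬(R+1-1 ≤ Q+1-1 ∧ (Q+1-1) + l ≤ n) from by omega)]
        simp
end
section
open Finset

def coefG (n q l r s : ℕ) : ℕ := triG n q l r s * chG q l
def coefW (n q l r s : ℕ) : ℕ := triG n q l r s * chW q l

noncomputable def mono (x1 x2 : ℝ) (n q l r s : ℕ) : ℝ :=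
  x2 ^ (1 + 2*(n:ℤ) - 4*((q:ℤ)+(l:ℤ)+(r:ℤ)+(s:ℤ))) * x1 ^ ((q:ℤ)+(l:ℤ)-(n:ℤ))
    * (x1+1)^(2*r+s+l)

noncomputable def GS (x1 x2 : ℝ) (n : ℕ) : ℝ :=
  ∑ q ∈ range (n+1), ∑ l ∈ range (n+1), ∑ r ∈ range (n+1), ∑ s ∈ range (n+1),
    mono x1 x2 n q l r s * (coefG n q l r s : ℝ)

noncomputable def WS (x1 x2 : ℝ) (n : ℕ) : ℝ :=
  ∑ q ∈ range (n+1), ∑ l ∈ range (n+1), ∑ r ∈ range (n+1), ∑ s ∈ range (n+1),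
    mono x1 x2 n q l r s * (coefW n q l r s : ℝ)

lemma triG_big {n q l r s : ℕ} (h : n < q ∨ n < l ∨ n < r ∨ n < s) : triG n q l r s = 0 := by
  unfold triG
  split_ifs with hg
  · obtain ⟨h1, h2⟩ := hg
    rcases h with h | h | h | h
    · omega
    · omega
    · omega
    · exact tri_zero_big (by omega)
  · rfl

lemma coefG_big {n q l r s : ℕ} (h : n < q ∨ n < l ∨ n < r ∨ n < s) : coefG n q l r s = 0 := by
  unfold coefG; rw [triG_big h, zero_mul]

lemma coefW_big {n q l r s : ℕ} (h : n < q ∨ n < l ∨ n < r ∨ n < s) : coefW n q l r s = 0 := by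
  unfold coefW; rw [triG_big h, zero_mul]

lemma sum4_ext (f : ℕ → ℕ → ℕ → ℕ → ℝ) {B B' : ℕ} (hB : B ≤ B')
    (hf : ∀ q l r s, B ≤ q ∨ B ≤ l ∨ B ≤ r ∨ B ≤ s → f q l r s = 0) :
    (∑ q ∈ range B, ∑ l ∈ range B, ∑ r ∈ range B, ∑ s ∈ range B, f q l r s)
    = ∑ q ∈ range B', ∑ l ∈ range B', ∑ r ∈ range B', ∑ s ∈ range B', f q l r s := by
  have hsub : range B ⊆ range B' := range_subset_range.2 hB
  have h4 : ∀ q l r, (∑ s ∈ range B, f q l r s) = ∑ s ∈ range B', f q l r s :=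
    fun q l r => sum_subset hsub fun s _ hs =>
      hf q l r s (Or.inr (Or.inr (Or.inr (by simpa using hs))))
  have h3 : ∀ q l, (∑ r ∈ range B, ∑ s ∈ range B', f q l r s)
      = ∑ r ∈ range B', ∑ s ∈ range B', f q l r s :=
    fun q l => sum_subset hsub fun r _ hr => sum_eq_zero fun s _ =>
      hf q l r s (Or.inr (Or.inr (Or.inl (by simpa using hr))))
  have h2 : ∀ q, (∑ l ∈ range B, ∑ r ∈ range B', ∑ s ∈ range B', f q l r s)
      = ∑ l ∈ range B', ∑ r ∈ range B', ∑ s ∈ range B', f q l r s :=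
    fun q => sum_subset hsub fun l _ hl => sum_eq_zero fun r _ => sum_eq_zero fun s _ =>
      hf q l r s (Or.inr (Or.inl (by simpa using hl)))
  have h1 : (∑ q ∈ range B, ∑ l ∈ range B', ∑ r ∈ range B', ∑ s ∈ range B', f q l r s)
      = ∑ q ∈ range B', ∑ l ∈ range B', ∑ r ∈ range B', ∑ s ∈ range B', f q l r s :=
    sum_subset hsub fun q _ hq => sum_eq_zero fun l _ => sum_eq_zero fun r _ =>
      sum_eq_zero fun s _ => hf q l r s (Or.inl (by simpa using hq))
  simp_rw [h4]
  simp_rw [h3]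
  simp_rw [h2]
  exact h1

lemma GS_box (x1 x2 : ℝ) (n B : ℕ) (hB : n + 1 ≤ B) :
    GS x1 x2 n = ∑ q ∈ range B, ∑ l ∈ range B, ∑ r ∈ range B, ∑ s ∈ range B,
      mono x1 x2 n q l r s * (coefG n q l r s : ℝ) :=
  sum4_ext _ hB fun q l r s h => by
    rw [coefG_big (by omega), Nat.cast_zero, mul_zero]

lemma WS_box (x1 x2 : ℝ) (n B : ℕ) (hB : n + 1 ≤ B) :
    WS x1 x2 n = ∑ q ∈ range B, ∑ l ∈ range B, ∑ r ∈ range B, ∑ s ∈ range B,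
      mono x1 x2 n q l r s * (coefW n q l r s : ℝ) :=
  sum4_ext _ hB fun q l r s h => by
    rw [coefW_big (by omega), Nat.cast_zero, mul_zero]

lemma mono_eq {x1 x2 : ℝ} (h1 : x1 ≠ 0) (h2 : x2 ≠ 0) (u v w u' v' w' : ℕ)
    (n q l r s n' q' l' r' s' : ℕ)
    (hE : (u:ℤ) + (1 + 2*(n:ℤ) - 4*((q:ℤ)+(l:ℤ)+(r:ℤ)+(s:ℤ)))
        = (u':ℤ) + (1 + 2*(n':ℤ) - 4*((q':ℤ)+(l':ℤ)+(r':ℤ)+(s':ℤ))))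
    (hF : (v:ℤ) + ((q:ℤ)+(l:ℤ)-(n:ℤ)) = (v':ℤ) + ((q':ℤ)+(l':ℤ)-(n':ℤ)))
    (hC : w + (2*r+s+l) = w' + (2*r'+s'+l')) :
    x1^v * x2^u * (x1+1)^w * mono x1 x2 n q l r s
      = x1^v' * x2^u' * (x1+1)^w' * mono x1 x2 n' q' l' r' s' := by
  unfold mono
  have A : (x2:ℝ)^u * x2 ^ (1 + 2*(n:ℤ) - 4*((q:ℤ)+(l:ℤ)+(r:ℤ)+(s:ℤ)))
      = x2^u' * x2 ^ (1 + 2*(n':ℤ) - 4*((q':ℤ)+(l':ℤ)+(r':ℤ)+(s':ℤ))) := by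
    rw [← zpow_natCast x2 u, ← zpow_natCast x2 u', ← zpow_add₀ h2, ← zpow_add₀ h2, hE]
  have B : (x1:ℝ)^v * x1 ^ ((q:ℤ)+(l:ℤ)-(n:ℤ)) = x1^v' * x1 ^ ((q':ℤ)+(l':ℤ)-(n':ℤ)) := by
    rw [← zpow_natCast x1 v, ← zpow_natCast x1 v', ← zpow_add₀ h1, ← zpow_add₀ h1, hF]
  have C : ((x1:ℝ)+1)^w * (x1+1)^(2*r+s+l) = (x1+1)^w' * (x1+1)^(2*r'+s'+l') := by
    rw [← pow_add, ← pow_add, hC]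
  have goal2 : ((x2:ℝ)^u * x2 ^ (1 + 2*(n:ℤ) - 4*((q:ℤ)+(l:ℤ)+(r:ℤ)+(s:ℤ))))
      * ((x1^v * x1 ^ ((q:ℤ)+(l:ℤ)-(n:ℤ))) * ((x1+1)^w * (x1+1)^(2*r+s+l)))
      = ((x2:ℝ)^u' * x2 ^ (1 + 2*(n':ℤ) - 4*((q':ℤ)+(l':ℤ)+(r':ℤ)+(s':ℤ))))
      * ((x1^v' * x1 ^ ((q':ℤ)+(l':ℤ)-(n':ℤ))) * ((x1+1)^w' * (x1+1)^(2*r'+s'+l'))) := by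
    rw [A, B, C]
  linear_combination goal2
end
section
open Finset

variable {x1 x2 : ℝ}

lemma TM1 (h1 : x1 ≠ 0) (h2 : x2 ≠ 0) (n q l r s : ℕ) (c : ℝ) :
    x1 * x2^4 * (mono x1 x2 (n+2) q l r s * c) = x2^6 * (mono x1 x2 (n+1) q l r s * c) := by
  have h := mono_eq h1 h2 4 1 0 6 0 0 (n+2) q l r s (n+1) q l r s
    (by push_cast; ring) (by push_cast; ring) (by ring)
  simp only [pow_one, pow_zero, one_mul, mul_one] at h
  linear_combination c * h

lemma TM2 (h1 : x1 ≠ 0) (h2 : x2 ≠ 0) (n q l r s : ℕ) (c : ℝ) :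
    x1 * x2^4 * (mono x1 x2 (n+2) q l r (s+1) * c)
      = x2^2*(x1+1) * (mono x1 x2 (n+1) q l r s * c) := by
  have h := mono_eq h1 h2 4 1 0 2 0 1 (n+2) q l r (s+1) (n+1) q l r s
    (by push_cast; ring) (by push_cast; ring) (by ring)
  simp only [pow_one, pow_zero, one_mul, mul_one] at h
  linear_combination c * h

lemma TM3 (h1 : x1 ≠ 0) (h2 : x2 ≠ 0) (n q l r s : ℕ) (c : ℝ) :
    x1 * x2^4 * (mono x1 x2 (n+2) (q+1) l r s * c) = x2^4 * (mono x1 x2 n q l r s * c) := by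
  have h := mono_eq h1 h2 4 1 0 4 0 0 (n+2) (q+1) l r s n q l r s
    (by push_cast; ring) (by push_cast; ring) (by ring)
  simp only [pow_one, pow_zero, one_mul, mul_one] at h
  linear_combination c * h

lemma TM4 (h1 : x1 ≠ 0) (h2 : x2 ≠ 0) (n q l r s : ℕ) (c : ℝ) :
    x1 * x2^4 * (mono x1 x2 (n+2) (q+1) l (r+1) s * c) = (x1+1)^2 * (mono x1 x2 n q l r s * c) := by
  have h := mono_eq h1 h2 4 1 0 0 0 2 (n+2) (q+1) l (r+1) s n q l r s
    (by push_cast; ring) (by push_cast; ring) (by ring)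
  simp only [pow_one, pow_zero, one_mul, mul_one] at h
  linear_combination c * h

lemma TM5 (h1 : x1 ≠ 0) (h2 : x2 ≠ 0) (n q l r s : ℕ) (c : ℝ) :
    x2^2 * (mono x1 x2 (n+1) q (l+1) r s * c) = (x1+1) * (mono x1 x2 n q l r s * c) := by
  have h := mono_eq h1 h2 2 0 0 0 0 1 (n+1) q (l+1) r s n q l r s
    (by push_cast; ring) (by push_cast; ring) (by ring)
  simp only [pow_one, pow_zero, one_mul, mul_one] at h
  linear_combination c * h

lemma keyR (n q l r s : ℕ) :
    ((coefG (n+2) q l r s : ℕ) : ℝ) =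
      ((coefG (n+1) q l r s : ℕ) : ℝ)
      + (if s = 0 then 0 else ((coefG (n+1) q l r (s-1) : ℕ) : ℝ))
      + (if q = 0 then 0 else ((coefW n (q-1) l r s : ℕ) : ℝ))
      + (if q = 0 then 0 else if r = 0 then 0 else ((coefW n (q-1) l (r-1) s : ℕ) : ℝ)) := by
  have h := key n q l r s
  simp only [coefG, coefW]
  split_ifs at h ⊢ <;> exact_mod_cast h

lemma keyW (q l : ℕ) : chW q l = chG q l + (if l = 0 then 0 else chW q (l-1)) := by
  rcases l with _ | L
  · rcases q with _ | Q <;> simp [chW, chG]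
  · rw [if_neg (Nat.succ_ne_zero L)]
    simp only [chW, chG, Nat.succ_ne_zero, and_false, if_false, Nat.add_sub_cancel]
    rw [show q + (L+1) = (q+L) + 1 from by ring, Nat.choose_succ_succ', Nat.add_sub_cancel]
    exact Nat.add_comm _ _

lemma keyWR (n q l r s : ℕ) :
    ((coefW n q l r s : ℕ) : ℝ) = ((coefG n q l r s : ℕ) : ℝ)
      + (if l = 0 then 0 else ((triG n q l r s * chW q (l-1) : ℕ) : ℝ)) := by
  have h := keyW q l
  simp only [coefG, coefW]
  split_ifs with hl
  · rw [h, hl]; push_cast; ring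
  · rw [if_neg hl] at h
    rw [h]; push_cast; ring

lemma triG_shift (n q l r s : ℕ) : triG (n+1) q (l+1) r s = triG n q l r s := by
  unfold triG
  by_cases h : r ≤ q ∧ q + l ≤ n
  · rw [if_pos ⟨h.1, by omega⟩, if_pos h, show n+1-q-(l+1) = n-q-l from by omega]
  · rw [if_neg (by omega : ¬(r ≤ q ∧ q + (l+1) ≤ n+1)), if_neg h]
end
section
open Finset

variable {x1 x2 : ℝ}

lemma Wrec (h1 : x1 ≠ 0) (h2 : x2 ≠ 0) (n : ℕ) :
    x2^2 * WS x1 x2 (n+1) = x2^2 * GS x1 x2 (n+1) + (x1+1) * WS x1 x2 n := by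
  have HB : (∑ q ∈ range (n+2), ∑ l ∈ range (n+2), ∑ r ∈ range (n+2), ∑ s ∈ range (n+2),
      x2^2 * (mono x1 x2 (n+1) q l r s
        * (if l = 0 then (0:ℝ) else ((triG (n+1) q l r s * chW q (l-1) : ℕ) : ℝ))))
      = (x1+1) * WS x1 x2 n := by
    have inner : ∀ q, (∑ l ∈ range (n+2), ∑ r ∈ range (n+2), ∑ s ∈ range (n+2),
        x2^2 * (mono x1 x2 (n+1) q l r s
          * (if l = 0 then (0:ℝ) else ((triG (n+1) q l r s * chW q (l-1) : ℕ) : ℝ))))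
        = ∑ l ∈ range (n+2), ∑ r ∈ range (n+2), ∑ s ∈ range (n+2),
          (x1+1) * (mono x1 x2 n q l r s * (coefW n q l r s : ℝ)) := by
      intro q
      rw [Finset.sum_range_succ']
      have hz : (∑ r ∈ range (n+2), ∑ s ∈ range (n+2),
          x2^2 * (mono x1 x2 (n+1) q 0 r s
            * (if (0:ℕ) = 0 then (0:ℝ) else ((triG (n+1) q 0 r s * chW q (0-1) : ℕ) : ℝ)))) = 0 := by
        simp
      rw [hz, add_zero]
      have main : ∀ l, (∑ r ∈ range (n+2), ∑ s ∈ range (n+2),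
          x2^2 * (mono x1 x2 (n+1) q (l+1) r s
            * (if l + 1 = 0 then (0:ℝ) else ((triG (n+1) q (l+1) r s * chW q (l+1-1) : ℕ) : ℝ))))
          = ∑ r ∈ range (n+2), ∑ s ∈ range (n+2),
            (x1+1) * (mono x1 x2 n q l r s * (coefW n q l r s : ℝ)) := by
        intro l
        refine sum_congr rfl fun r _ => sum_congr rfl fun s _ => ?_
        rw [if_neg (Nat.succ_ne_zero l), Nat.add_sub_cancel, triG_shift]
        exact TM5 h1 h2 n q l r s _
      simp_rw [main]
      -- extend l-range from n+1 to n+2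
      refine sum_subset (range_subset_range.2 (by omega)) fun l _ hl => ?_
      have : n < l := by simpa using hl
      refine sum_eq_zero fun r _ => sum_eq_zero fun s _ => ?_
      rw [coefW_big (by omega), Nat.cast_zero, mul_zero, mul_zero]
    simp_rw [inner]
    simp_rw [← Finset.mul_sum]
    rw [← WS_box x1 x2 n (n+2) (by omega)]
  rw [WS, GS]
  simp only [Finset.mul_sum]
  have split : ∀ q l r s, x2^2 * (mono x1 x2 (n+1) q l r s * (coefW (n+1) q l r s : ℝ))
      = x2^2 * (mono x1 x2 (n+1) q l r s * (coefG (n+1) q l r s : ℝ))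
        + x2^2 * (mono x1 x2 (n+1) q l r s
          * (if l = 0 then (0:ℝ) else ((triG (n+1) q l r s * chW q (l-1) : ℕ) : ℝ))) := by
    intro q l r s; rw [keyWR]; ring
  simp_rw [split, Finset.sum_add_distrib]
  rw [HB]

lemma Dn (h1 : x1 ≠ 0) (h2 : x2 ≠ 0) (n : ℕ) :
    x1 * x2^4 * GS x1 x2 (n+2) = x2^6 * GS x1 x2 (n+1) + x2^2*(x1+1) * GS x1 x2 (n+1)
      + x2^4 * WS x1 x2 n + (x1+1)^2 * WS x1 x2 n := by
  have HA : (∑ q ∈ range (n+3), ∑ l ∈ range (n+3), ∑ r ∈ range (n+3), ∑ s ∈ range (n+3),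
      x1 * x2^4 * (mono x1 x2 (n+2) q l r s * (coefG (n+1) q l r s : ℝ)))
      = x2^6 * GS x1 x2 (n+1) := by
    simp_rw [TM1 h1 h2, ← Finset.mul_sum]
    rw [← GS_box x1 x2 (n+1) (n+3) (by omega)]
  have HB : (∑ q ∈ range (n+3), ∑ l ∈ range (n+3), ∑ r ∈ range (n+3), ∑ s ∈ range (n+3),
      x1 * x2^4 * (mono x1 x2 (n+2) q l r s
        * (if s = 0 then (0:ℝ) else ((coefG (n+1) q l r (s-1) : ℕ) : ℝ))))
      = x2^2*(x1+1) * GS x1 x2 (n+1) := by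
    have inner : ∀ q l r, (∑ s ∈ range (n+3),
        x1 * x2^4 * (mono x1 x2 (n+2) q l r s
          * (if s = 0 then (0:ℝ) else ((coefG (n+1) q l r (s-1) : ℕ) : ℝ))))
        = ∑ s ∈ range (n+3),
          x2^2*(x1+1) * (mono x1 x2 (n+1) q l r s * (coefG (n+1) q l r s : ℝ)) := by
      intro q l r
      rw [Finset.sum_range_succ']
      have hz : x1 * x2^4 * (mono x1 x2 (n+2) q l r 0
          * (if (0:ℕ) = 0 then (0:ℝ) else ((coefG (n+1) q l r (0-1) : ℕ) : ℝ))) = 0 := by simp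
      rw [hz, add_zero]
      have main : ∀ s, x1 * x2^4 * (mono x1 x2 (n+2) q l r (s+1)
          * (if s+1 = 0 then (0:ℝ) else ((coefG (n+1) q l r (s+1-1) : ℕ) : ℝ)))
          = x2^2*(x1+1) * (mono x1 x2 (n+1) q l r s * (coefG (n+1) q l r s : ℝ)) := by
        intro s
        rw [if_neg (Nat.succ_ne_zero s), Nat.add_sub_cancel]
        exact TM2 h1 h2 n q l r s _
      simp_rw [main]
      refine sum_subset (range_subset_range.2 (by omega)) fun s _ hs => ?_
      have : n + 1 < s := by simp at hs; omega
      rw [coefG_big (by omega), Nat.cast_zero, mul_zero, mul_zero]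
    simp_rw [inner, ← Finset.mul_sum]
    rw [← GS_box x1 x2 (n+1) (n+3) (by omega)]
  have HC : (∑ q ∈ range (n+3), ∑ l ∈ range (n+3), ∑ r ∈ range (n+3), ∑ s ∈ range (n+3),
      x1 * x2^4 * (mono x1 x2 (n+2) q l r s
        * (if q = 0 then (0:ℝ) else ((coefW n (q-1) l r s : ℕ) : ℝ))))
      = x2^4 * WS x1 x2 n := by
    rw [Finset.sum_range_succ']
    have hz : (∑ l ∈ range (n+3), ∑ r ∈ range (n+3), ∑ s ∈ range (n+3),
        x1 * x2^4 * (mono x1 x2 (n+2) 0 l r s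
          * (if (0:ℕ) = 0 then (0:ℝ) else ((coefW n (0-1) l r s : ℕ) : ℝ)))) = 0 := by simp
    rw [hz, add_zero]
    have main : ∀ q, (∑ l ∈ range (n+3), ∑ r ∈ range (n+3), ∑ s ∈ range (n+3),
        x1 * x2^4 * (mono x1 x2 (n+2) (q+1) l r s
          * (if q+1 = 0 then (0:ℝ) else ((coefW n (q+1-1) l r s : ℕ) : ℝ))))
        = ∑ l ∈ range (n+3), ∑ r ∈ range (n+3), ∑ s ∈ range (n+3),
          x2^4 * (mono x1 x2 n q l r s * (coefW n q l r s : ℝ)) := by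
      intro q
      refine sum_congr rfl fun l _ => sum_congr rfl fun r _ => sum_congr rfl fun s _ => ?_
      rw [if_neg (Nat.succ_ne_zero q), Nat.add_sub_cancel]
      exact TM3 h1 h2 n q l r s _
    simp_rw [main]
    have ext : (∑ q ∈ range (n+2), ∑ l ∈ range (n+3), ∑ r ∈ range (n+3), ∑ s ∈ range (n+3),
        x2^4 * (mono x1 x2 n q l r s * (coefW n q l r s : ℝ)))
        = ∑ q ∈ range (n+3), ∑ l ∈ range (n+3), ∑ r ∈ range (n+3), ∑ s ∈ range (n+3),
          x2^4 * (mono x1 x2 n q l r s * (coefW n q l r s : ℝ)) := by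
      refine sum_subset (range_subset_range.2 (by omega)) fun q _ hq => ?_
      have : n + 1 < q := by simp at hq; omega
      refine sum_eq_zero fun l _ => sum_eq_zero fun r _ => sum_eq_zero fun s _ => ?_
      rw [coefW_big (by omega), Nat.cast_zero, mul_zero, mul_zero]
    rw [ext]
    simp_rw [← Finset.mul_sum]
    rw [← WS_box x1 x2 n (n+3) (by omega)]
  have HD : (∑ q ∈ range (n+3), ∑ l ∈ range (n+3), ∑ r ∈ range (n+3), ∑ s ∈ range (n+3),
      x1 * x2^4 * (mono x1 x2 (n+2) q l r s
        * (if q = 0 then (0:ℝ) else if r = 0 then (0:ℝ)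
            else ((coefW n (q-1) l (r-1) s : ℕ) : ℝ))))
      = (x1+1)^2 * WS x1 x2 n := by
    rw [Finset.sum_range_succ']
    have hz : (∑ l ∈ range (n+3), ∑ r ∈ range (n+3), ∑ s ∈ range (n+3),
        x1 * x2^4 * (mono x1 x2 (n+2) 0 l r s
          * (if (0:ℕ) = 0 then (0:ℝ) else if r = 0 then (0:ℝ)
              else ((coefW n (0-1) l (r-1) s : ℕ) : ℝ)))) = 0 := by simp
    rw [hz, add_zero]
    have main : ∀ q, (∑ l ∈ range (n+3), ∑ r ∈ range (n+3), ∑ s ∈ range (n+3),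
        x1 * x2^4 * (mono x1 x2 (n+2) (q+1) l r s
          * (if q+1 = 0 then (0:ℝ) else if r = 0 then (0:ℝ)
              else ((coefW n (q+1-1) l (r-1) s : ℕ) : ℝ))))
        = ∑ l ∈ range (n+3), ∑ r ∈ range (n+3), ∑ s ∈ range (n+3),
          (x1+1)^2 * (mono x1 x2 n q l r s * (coefW n q l r s : ℝ)) := by
      intro q
      refine sum_congr rfl fun l _ => ?_
      rw [Finset.sum_range_succ']
      have hz2 : (∑ s ∈ range (n+3),
          x1 * x2^4 * (mono x1 x2 (n+2) (q+1) l 0 s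
            * (if q+1 = 0 then (0:ℝ) else if (0:ℕ) = 0 then (0:ℝ)
                else ((coefW n (q+1-1) l (0-1) s : ℕ) : ℝ)))) = 0 := by simp
      rw [hz2, add_zero]
      have main2 : ∀ r, (∑ s ∈ range (n+3),
          x1 * x2^4 * (mono x1 x2 (n+2) (q+1) l (r+1) s
            * (if q+1 = 0 then (0:ℝ) else if r+1 = 0 then (0:ℝ)
                else ((coefW n (q+1-1) l (r+1-1) s : ℕ) : ℝ))))
          = ∑ s ∈ range (n+3),
            (x1+1)^2 * (mono x1 x2 n q l r s * (coefW n q l r s : ℝ)) := by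
        intro r
        refine sum_congr rfl fun s _ => ?_
        rw [if_neg (Nat.succ_ne_zero q), if_neg (Nat.succ_ne_zero r),
            Nat.add_sub_cancel, Nat.add_sub_cancel]
        exact TM4 h1 h2 n q l r s _
      simp_rw [main2]
      refine sum_subset (range_subset_range.2 (by omega)) fun r _ hr => ?_
      have : n + 1 < r := by simp at hr; omega
      refine sum_eq_zero fun s _ => ?_
      rw [coefW_big (by omega), Nat.cast_zero, mul_zero, mul_zero]
    simp_rw [main]
    have ext : (∑ q ∈ range (n+2), ∑ l ∈ range (n+3), ∑ r ∈ range (n+3), ∑ s ∈ range (n+3),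
        (x1+1)^2 * (mono x1 x2 n q l r s * (coefW n q l r s : ℝ)))
        = ∑ q ∈ range (n+3), ∑ l ∈ range (n+3), ∑ r ∈ range (n+3), ∑ s ∈ range (n+3),
          (x1+1)^2 * (mono x1 x2 n q l r s * (coefW n q l r s : ℝ)) := by
      refine sum_subset (range_subset_range.2 (by omega)) fun q _ hq => ?_
      have : n + 1 < q := by simp at hq; omega
      refine sum_eq_zero fun l _ => sum_eq_zero fun r _ => sum_eq_zero fun s _ => ?_
      rw [coefW_big (by omega), Nat.cast_zero, mul_zero, mul_zero]
    rw [ext]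
    simp_rw [← Finset.mul_sum]
    rw [← WS_box x1 x2 n (n+3) (by omega)]
  rw [GS]
  simp only [Finset.mul_sum]
  have split : ∀ q l r s, x1 * x2^4 * (mono x1 x2 (n+2) q l r s * (coefG (n+2) q l r s : ℝ))
      = x1 * x2^4 * (mono x1 x2 (n+2) q l r s * (coefG (n+1) q l r s : ℝ))
        + x1 * x2^4 * (mono x1 x2 (n+2) q l r s
            * (if s = 0 then (0:ℝ) else ((coefG (n+1) q l r (s-1) : ℕ) : ℝ)))
        + x1 * x2^4 * (mono x1 x2 (n+2) q l r s
            * (if q = 0 then (0:ℝ) else ((coefW n (q-1) l r s : ℕ) : ℝ)))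
        + x1 * x2^4 * (mono x1 x2 (n+2) q l r s
            * (if q = 0 then (0:ℝ) else if r = 0 then (0:ℝ)
                else ((coefW n (q-1) l (r-1) s : ℕ) : ℝ))) := by
    intro q l r s
    rw [keyR]
    ring
  simp_rw [split, Finset.sum_add_distrib]
  rw [HA, HB, HC, HD]
end
section
open Finset

variable {x1 x2 : ℝ}

lemma GS0 : GS x1 x2 0 = x2 := by
  norm_num [GS, coefG, triG, tri, chG, mono, Finset.sum_range_succ]

lemma WS0 : WS x1 x2 0 = x2 := by
  norm_num [WS, coefW, triG, tri, chW, mono, Finset.sum_range_succ]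

set_option maxHeartbeats 2000000 in
lemma GS1 (h1 : x1 ≠ 0) (h2 : x2 ≠ 0) : x1 * x2 * GS x1 x2 1 = x2^4 + (x1+1) := by
  rw [GS]
  simp only [Finset.sum_range_succ, Finset.sum_range_zero]
  norm_num [coefG, triG, tri, chG]
  rw [mono, mono]
  norm_num
  field_simp

lemma ladder (h1 : x1 ≠ 0) (h2 : x2 ≠ 0) (n : ℕ) :
    ((x2^4+(x1+1)^2) * WS x1 x2 n
        = x1*x2^2*(x1+1) * GS x1 x2 (n+1) - x1*x2^4 * GS x1 x2 n)
    ∧ (x1*x2^2 * GS x1 x2 (n+2)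
        = (x2^4+(x1+1)^2) * GS x1 x2 (n+1) - x1*x2^2 * GS x1 x2 n) := by
  have hx2sq : (x2:ℝ)^2 ≠ 0 := pow_ne_zero 2 h2
  induction n with
  | zero =>
    have hstar : (x2^4+(x1+1)^2) * WS x1 x2 0
        = x1*x2^2*(x1+1) * GS x1 x2 1 - x1*x2^4 * GS x1 x2 0 := by
      rw [WS0, GS0]
      have hg1 := GS1 h1 h2
      linear_combination -x2*(x1+1)*hg1
    refine ⟨hstar, ?_⟩
    have hD := Dn h1 h2 0
    apply mul_left_cancel₀ hx2sq
    linear_combination hD + hstar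
  | succ n ih =>
    obtain ⟨hstar, hA⟩ := ih
    have hW := Wrec h1 h2 n
    have hstar' : (x2^4+(x1+1)^2) * WS x1 x2 (n+1)
        = x1*x2^2*(x1+1) * GS x1 x2 (n+2) - x1*x2^4 * GS x1 x2 (n+1) := by
      apply mul_left_cancel₀ hx2sq
      linear_combination (x2^4+(x1+1)^2) * hW + (x1+1) * hstar - x2^2*(x1+1) * hA
    refine ⟨hstar', ?_⟩
    have hD := Dn h1 h2 (n+1)
    apply mul_left_cancel₀ hx2sq
    linear_combination hD + hstar'
end
section
open Finset

section xside

variable (x : ℤ → ℝ) (hpos : ∀ n, 0 < x n)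
  (heven : ∀ n : ℤ, x (2 * n) = (1 + x (2 * n - 1)) / x (2 * n - 2))
  (hodd : ∀ n : ℤ, x (2 * n + 1) = (1 + x (2 * n) ^ 4) / x (2 * n - 1))

include hpos heven in
lemma xodd_rel (k : ℤ) : x (2*k+2) * x (2*k) = 1 + x (2*k+1) := by
  have h := heven (k+1)
  rw [show 2*(k+1) = 2*k+2 from by ring, show 2*k+2-1 = 2*k+1 from by ring,
      show 2*k+2-2 = 2*k from by ring] at h
  rw [h, div_mul_cancel₀]
  exact ne_of_gt (hpos _)

include hpos heven hodd in
lemma Nrec (k : ℤ) :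
    x (2*k+4) * (x (2*k+2) * x (2*k) - 1) = x (2*k) + x (2*k+2)^3 := by
  have h1 : x (2*k+4) * x (2*k+2) = 1 + x (2*k+3) := by
    have h := heven (k+2)
    rw [show 2*(k+2) = 2*k+4 from by ring, show 2*k+4-1 = 2*k+3 from by ring,
        show 2*k+4-2 = 2*k+2 from by ring] at h
    rw [h, div_mul_cancel₀]
    exact ne_of_gt (hpos _)
  have h2 : x (2*k+3) * x (2*k+1) = 1 + x (2*k+2)^4 := by
    have h := hodd (k+1)
    rw [show 2*(k+1)+1 = 2*k+3 from by ring, show 2*(k+1) = 2*k+2 from by ring,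
        show 2*k+2-1 = 2*k+1 from by ring] at h
    rw [h, div_mul_cancel₀]
    exact ne_of_gt (hpos _)
  have h3 := xodd_rel x hpos heven k
  have hne : x (2*k+2) ≠ 0 := ne_of_gt (hpos _)
  apply mul_left_cancel₀ hne
  linear_combination x (2*k+1) * h1 + h2 + (x (2*k+2) * x (2*k+4) - 1) * h3

include hpos heven hodd in
lemma Lrec (n : ℕ) :
    x 1 * (x 2)^2 * x (2*(n:ℤ)+4)
      = ((x 2)^4 + (x 1 + 1)^2) * x (2*(n:ℤ)+2) - x 1 * (x 2)^2 * x (2*(n:ℤ)) := by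
  induction n with
  | zero =>
    have he1 : x 2 * x 0 = 1 + x 1 := by
      have h := xodd_rel x hpos heven 0
      norm_num at h
      linarith [h]
    have ho1 : x 3 * x 1 = 1 + x 2 ^ 4 := by
      have h := hodd 1
      norm_num at h
      rw [h, div_mul_cancel₀]
      exact ne_of_gt (hpos _)
    have he2 : x 4 * x 2 = 1 + x 3 := by
      have h := heven 2
      norm_num at h
      rw [h, div_mul_cancel₀]
      exact ne_of_gt (hpos _)
    norm_num
    linear_combination x 1 * x 2 * he2 + x 2 * ho1 + x 1 * x 2 * he1
  | succ n ih =>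
    have hN1 := Nrec x hpos heven hodd (n:ℤ)
    have hN2 := Nrec x hpos heven hodd ((n:ℤ)+1)
    push_cast
    rw [show 2*((n:ℤ)+1)+4 = 2*(n:ℤ)+6 from by ring,
        show 2*((n:ℤ)+1)+2 = 2*(n:ℤ)+4 from by ring,
        show 2*((n:ℤ)+1) = 2*(n:ℤ)+2 from by ring] at hN2 ⊢
    -- abbreviations
    have hu : 0 < x (2*(n:ℤ)) := hpos _
    have hv : 0 < x (2*(n:ℤ)+2) := hpos _
    have hw : 0 < x (2*(n:ℤ)+4) := hpos _
    have hden : x (2*(n:ℤ)+2) * x (2*(n:ℤ)) - 1 = x (2*(n:ℤ)+1) := by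
      have := xodd_rel x hpos heven (n:ℤ)
      linarith [this]
    have hden2 : x (2*(n:ℤ)+4) * x (2*(n:ℤ)+2) - 1 = x (2*(n:ℤ)+3) := by
      have := xodd_rel x hpos heven ((n:ℤ)+1)
      rw [show 2*((n:ℤ)+1)+2 = 2*(n:ℤ)+4 from by ring,
          show 2*((n:ℤ)+1) = 2*(n:ℤ)+2 from by ring,
          show 2*(n:ℤ)+2+1 = 2*(n:ℤ)+3 from by ring] at this
      linarith [this]
    have hd2pos : 0 < x (2*(n:ℤ)+4) * x (2*(n:ℤ)+2) - 1 := by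
      rw [hden2]; exact hpos _
    -- key fact: A = c (u w - v^2)
    have hkey : ((x 2)^4 + (x 1 + 1)^2)
        = x 1 * (x 2)^2 * (x (2*(n:ℤ)) * x (2*(n:ℤ)+4) - x (2*(n:ℤ)+2)^2) := by
      apply mul_right_cancel₀ (ne_of_gt hv)
      linear_combination (-(x 1 * (x 2)^2)) * hN1 - ih
    apply mul_right_cancel₀ (ne_of_gt hd2pos)
    linear_combination x 1 * (x 2)^2 * hN2
      + (x (2*(n:ℤ)+4) * (1 - x (2*(n:ℤ)+4) * x (2*(n:ℤ)+2))) * hkey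
      - x 1 * (x 2)^2 * (x (2*(n:ℤ)+4))^2 * hN1

include hpos heven hodd in
lemma xeqG (n : ℕ) : x (2*(n:ℤ)+2) = GS (x 1) (x 2) n := by
  have h1 : x 1 ≠ 0 := ne_of_gt (hpos 1)
  have h2 : x 2 ≠ 0 := ne_of_gt (hpos 2)
  have main : ∀ n : ℕ, x (2*(n:ℤ)+2) = GS (x 1) (x 2) n
      ∧ x (2*(n:ℤ)+4) = GS (x 1) (x 2) (n+1) := by
    intro n
    induction n with
    | zero =>
      constructor
      · norm_num [GS0]
      · have ho1 : x 3 * x 1 = 1 + x 2 ^ 4 := by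
          have h := hodd 1
          norm_num at h
          rw [h, div_mul_cancel₀]
          exact ne_of_gt (hpos _)
        have he2 : x 4 * x 2 = 1 + x 3 := by
          have h := heven 2
          norm_num at h
          rw [h, div_mul_cancel₀]
          exact ne_of_gt (hpos _)
        have hG1 := GS1 h1 h2
        have : x 1 * x 2 * x 4 = x 1 * x 2 * GS (x 1) (x 2) 1 := by
          rw [hG1]
          linear_combination x 1 * he2 + ho1
        have h4 := mul_left_cancel₀ (mul_ne_zero h1 h2) this
        norm_num
        exact h4
    | succ n ih =>
      obtain ⟨ih1, ih2⟩ := ih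
      constructor
      · push_cast
        rw [show 2*((n:ℤ)+1)+2 = 2*(n:ℤ)+4 from by ring]
        exact ih2
      · push_cast
        rw [show 2*((n:ℤ)+1)+4 = 2*(n:ℤ)+6 from by ring]
        have hL := Lrec x hpos heven hodd (n+1)
        push_cast at hL
        rw [show 2*((n:ℤ)+1)+4 = 2*(n:ℤ)+6 from by ring,
            show 2*((n:ℤ)+1)+2 = 2*(n:ℤ)+4 from by ring,
            show 2*((n:ℤ)+1) = 2*(n:ℤ)+2 from by ring] at hL
        have hA := (ladder h1 h2 n).2
        rw [ih1, ih2] at hL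
        have hc : x 1 * (x 2)^2 ≠ 0 := mul_ne_zero h1 (pow_ne_zero 2 h2)
        apply mul_left_cancel₀ hc
        rw [hL, hA]
  exact (main n).1

end xside
end
section
open Finset
lemma ic_nat (E m : ℕ) : intChoose (E:ℤ) (m:ℤ) = (E.choose m : ℤ) := by
  unfold intChoose
  split_ifs with h h2
  · simp
  · exfalso; omega
  · have : E < m := by omega
    simp [Nat.choose_eq_zero_of_lt this]

lemma icG (q l : ℕ) : intChoose ((q:ℤ)+l-1) (l:ℤ) = (chG q l : ℤ) := by
  unfold intChoose chG
  by_cases hq : q = 0 ∧ l = 0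
  · obtain ⟨h1', h2'⟩ := hq
    subst h1' h2'
    norm_num
  · rw [if_neg hq]
    split_ifs with h h2
    · rw [show ((q:ℤ)+l-1) = ((q+l-1 : ℕ) : ℤ) from by omega]
      simp
    · exfalso; omega
    · have : q + l - 1 < l := by omega
      simp [Nat.choose_eq_zero_of_lt this]

lemma tri_eq_div (N a b c : ℕ) (h : a + b + c ≤ N) :
    N.factorial / (a.factorial * (b.factorial * (c.factorial * 1))
      * (N - (a + (b + (c + 0)))).factorial) = tri N a b c := by
  have e1 := Nat.choose_mul_factorial_mul_factorial (show a ≤ N by omega)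
  have e2 := Nat.choose_mul_factorial_mul_factorial (show b ≤ N - a by omega)
  have e3 := Nat.choose_mul_factorial_mul_factorial (show c ≤ N - a - b by omega)
  apply Nat.div_eq_of_eq_mul_left
  · positivity
  · rw [← e1, ← e2, ← e3, tri, show N - (a + (b + (c + 0))) = N - a - b - c from by omega]
    ring

lemma im_eq (n q l r s : ℕ) :
    intMultinomial ((n:ℤ)-q-l) [(q:ℤ)-r,(r:ℤ),(s:ℤ)] * intChoose ((q:ℤ)+l-1) (l:ℤ)
      = ((coefG n q l r s : ℕ) : ℤ) := by
  rw [icG]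
  unfold intMultinomial
  rw [coefG]
  by_cases hc1 : r ≤ q ∧ 2*q + l + s ≤ n
  · obtain ⟨hrq, h2⟩ := hc1
    rw [if_pos ?hc]
    case hc =>
      constructor
      · intro a ha
        simp only [List.mem_cons, List.not_mem_nil, or_false] at ha
        rcases ha with h | h | h <;> subst h <;> push_cast <;> omega
      · simp only [List.sum_cons, List.sum_nil]
        push_cast; omega
    simp only [List.map_cons, List.map_nil, List.prod_cons, List.prod_nil, List.sum_cons,
      List.sum_nil]
    rw [show ((n:ℤ)-q-l).toNat = n - q - l from by omega,
        show ((q:ℤ)-r).toNat = q - r from by omega,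
        Int.toNat_natCast, Int.toNat_natCast,
        show (((n:ℤ)-q-l) - ((q:ℤ)-r + ((r:ℤ) + ((s:ℤ) + 0)))).toNat
          = (n-q-l) - ((q-r) + (r + (s + 0))) from by omega]
    rw [tri_eq_div (n-q-l) (q-r) r s (by omega)]
    rw [triG_pos hrq (by omega)]
    push_cast
    ring
  · rcases le_or_gt r q with hrq | hrq
    · have h2 : n < 2*q + l + s := by omega
      rcases le_or_gt (q + l) n with hql | hql
      · rw [triG_pos hrq hql, tri_zero_big (by omega)]
        rw [if_neg ?c1, if_neg ?c2]
        case c1 =>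
          rintro ⟨-, hs2⟩
          simp only [List.sum_cons, List.sum_nil] at hs2
          push_cast at hs2
          omega
        case c2 =>
          rintro ⟨ha, -⟩
          omega
        simp
      · rw [triG_zero (by omega)]
        by_cases hg : q + l = n+1 ∧ q = 0 ∧ r = 0 ∧ s = 0
        · obtain ⟨hg1, hg2, hg3, hg4⟩ := hg
          subst hg2 hg3 hg4
          rw [if_neg ?d1, if_pos ?d2]
          case d1 =>
            rintro ⟨-, hs2⟩
            simp only [List.sum_cons, List.sum_nil] at hs2
            push_cast at hs2
            omega
          case d2 =>
            constructor
            · omega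
            · intro a ha
              simp only [List.mem_cons, List.not_mem_nil, or_false] at ha
              rcases ha with h | h | h <;> subst h <;> push_cast <;> omega
          rw [chG, if_neg (by omega), show (0:ℕ) + l - 1 = n from by omega,
              Nat.choose_eq_zero_of_lt (by omega : n < l)]
          simp
        · rw [if_neg ?e1, if_neg ?e2]
          case e1 =>
            rintro ⟨-, hs2⟩
            simp only [List.sum_cons, List.sum_nil] at hs2
            push_cast at hs2
            omega
          case e2 =>
            rintro ⟨ha, hb⟩
            simp only [List.forall_mem_cons, List.forall_mem_nil] at hb
            obtain ⟨hb1, hb2, hb3, -⟩ := hb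
            apply hg
            omega
          simp
    · rw [triG_zero (by omega)]
      rw [if_neg ?f1, if_neg ?f2]
      case f1 =>
        rintro ⟨ha, -⟩
        have := ha ((q:ℤ)-r) (by simp)
        omega
      case f2 =>
        rintro ⟨-, hb⟩
        have := hb ((q:ℤ)-r) (by simp)
        omega
      simp

lemma mcollapse (x1 x2 : ℝ) (h1 : x1 ≠ 0) (n q l r s : ℕ) :
    (∑ᶠ (m : ℕ),
      x2 ^ (1 + 2 * (n : ℤ) - 4 * ((q : ℤ) + (l : ℤ) + (r : ℤ) + (s : ℤ))) *
      x1 ^ ((q : ℤ) + (l : ℤ) + (m : ℤ) - (n : ℤ)) *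
      ((intMultinomial ((n : ℤ) - q - l) [(q : ℤ) - r, (r : ℤ), (s : ℤ)] *
        intChoose ((q : ℤ) + l - 1) (l : ℤ) *
        intChoose (2 * (r : ℤ) + s + l) (m : ℤ) : ℤ) : ℝ))
    = mono x1 x2 n q l r s * (coefG n q l r s : ℝ) := by
  set E := 2*r+s+l with hE
  have hbody : ∀ m : ℕ,
      x2 ^ (1 + 2 * (n : ℤ) - 4 * ((q : ℤ) + (l : ℤ) + (r : ℤ) + (s : ℤ))) *
      x1 ^ ((q : ℤ) + (l : ℤ) + (m : ℤ) - (n : ℤ)) *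
      ((intMultinomial ((n : ℤ) - q - l) [(q : ℤ) - r, (r : ℤ), (s : ℤ)] *
        intChoose ((q : ℤ) + l - 1) (l : ℤ) *
        intChoose (2 * (r : ℤ) + s + l) (m : ℤ) : ℤ) : ℝ)
      = (x2 ^ (1 + 2 * (n : ℤ) - 4 * ((q : ℤ) + (l : ℤ) + (r : ℤ) + (s : ℤ)))
          * x1 ^ ((q : ℤ) + (l : ℤ) - (n : ℤ)) * (coefG n q l r s : ℝ))
        * (x1 ^ m * 1 ^ (E - m) * (E.choose m : ℝ)) := by
    intro m
    rw [show ((q:ℤ) + (l:ℤ) + (m:ℤ) - (n:ℤ)) = ((q:ℤ) + (l:ℤ) - (n:ℤ)) + (m:ℤ) from by ring,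
        zpow_add₀ h1, zpow_natCast,
        show (2*(r:ℤ)+s+l) = ((E : ℕ) : ℤ) from by rw [hE]; push_cast; ring,
        ic_nat, im_eq]
    push_cast
    ring
  rw [finsum_congr hbody]
  rw [finsum_eq_sum_of_support_subset _
    (s := Finset.range (E+1))
    (by
      intro m hm
      simp only [Function.mem_support, ne_eq] at hm
      by_contra hmem
      apply hm
      have : E < m := by simpa using hmem
      rw [Nat.choose_eq_zero_of_lt this]
      norm_num)]
  rw [← Finset.mul_sum, ← add_pow]
  rw [mono]
  ring

lemma sumCollapse5 (x1 x2 : ℝ) (h1 : x1 ≠ 0) (n : ℕ) :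
    (∑ᶠ (q : ℕ), ∑ᶠ (l : ℕ), ∑ᶠ (r : ℕ), ∑ᶠ (s : ℕ), ∑ᶠ (m : ℕ),
      x2 ^ (1 + 2 * (n : ℤ) - 4 * ((q : ℤ) + (l : ℤ) + (r : ℤ) + (s : ℤ))) *
      x1 ^ ((q : ℤ) + (l : ℤ) + (m : ℤ) - (n : ℤ)) *
      ((intMultinomial ((n : ℤ) - q - l) [(q : ℤ) - r, (r : ℤ), (s : ℤ)] *
        intChoose ((q : ℤ) + l - 1) (l : ℤ) *
        intChoose (2 * (r : ℤ) + s + l) (m : ℤ) : ℤ) : ℝ))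
    = GS x1 x2 n := by
  have hzero : ∀ q l r s : ℕ, (n < q ∨ n < l ∨ n < r ∨ n < s) →
      mono x1 x2 n q l r s * (coefG n q l r s : ℝ) = 0 := by
    intro q l r s h
    rw [coefG_big h, Nat.cast_zero, mul_zero]
  have hs : ∀ q l r : ℕ, (∑ᶠ (s : ℕ), ∑ᶠ (m : ℕ),
      x2 ^ (1 + 2 * (n : ℤ) - 4 * ((q : ℤ) + (l : ℤ) + (r : ℤ) + (s : ℤ))) *
      x1 ^ ((q : ℤ) + (l : ℤ) + (m : ℤ) - (n : ℤ)) *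
      ((intMultinomial ((n : ℤ) - q - l) [(q : ℤ) - r, (r : ℤ), (s : ℤ)] *
        intChoose ((q : ℤ) + l - 1) (l : ℤ) *
        intChoose (2 * (r : ℤ) + s + l) (m : ℤ) : ℤ) : ℝ))
      = ∑ s ∈ range (n+1), mono x1 x2 n q l r s * (coefG n q l r s : ℝ) := by
    intro q l r
    rw [finsum_congr (fun s => mcollapse x1 x2 h1 n q l r s)]
    apply finsum_eq_sum_of_support_subset
    intro s hsup
    simp only [Function.mem_support, ne_eq] at hsup
    by_contra hmem
    exact hsup (hzero q l r s (by right; right; right; simpa using hmem))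
  have hr : ∀ q l : ℕ, (∑ᶠ (r : ℕ), ∑ᶠ (s : ℕ), ∑ᶠ (m : ℕ),
      x2 ^ (1 + 2 * (n : ℤ) - 4 * ((q : ℤ) + (l : ℤ) + (r : ℤ) + (s : ℤ))) *
      x1 ^ ((q : ℤ) + (l : ℤ) + (m : ℤ) - (n : ℤ)) *
      ((intMultinomial ((n : ℤ) - q - l) [(q : ℤ) - r, (r : ℤ), (s : ℤ)] *
        intChoose ((q : ℤ) + l - 1) (l : ℤ) *
        intChoose (2 * (r : ℤ) + s + l) (m : ℤ) : ℤ) : ℝ))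
      = ∑ r ∈ range (n+1), ∑ s ∈ range (n+1), mono x1 x2 n q l r s * (coefG n q l r s : ℝ) := by
    intro q l
    rw [finsum_congr (fun r => hs q l r)]
    apply finsum_eq_sum_of_support_subset
    intro r hsup
    simp only [Function.mem_support, ne_eq] at hsup
    by_contra hmem
    apply hsup
    apply Finset.sum_eq_zero
    intro s _
    exact hzero q l r s (by right; right; left; simpa using hmem)
  have hl : ∀ q : ℕ, (∑ᶠ (l : ℕ), ∑ᶠ (r : ℕ), ∑ᶠ (s : ℕ), ∑ᶠ (m : ℕ),
      x2 ^ (1 + 2 * (n : ℤ) - 4 * ((q : ℤ) + (l : ℤ) + (r : ℤ) + (s : ℤ))) *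
      x1 ^ ((q : ℤ) + (l : ℤ) + (m : ℤ) - (n : ℤ)) *
      ((intMultinomial ((n : ℤ) - q - l) [(q : ℤ) - r, (r : ℤ), (s : ℤ)] *
        intChoose ((q : ℤ) + l - 1) (l : ℤ) *
        intChoose (2 * (r : ℤ) + s + l) (m : ℤ) : ℤ) : ℝ))
      = ∑ l ∈ range (n+1), ∑ r ∈ range (n+1), ∑ s ∈ range (n+1),
          mono x1 x2 n q l r s * (coefG n q l r s : ℝ) := by
    intro q
    rw [finsum_congr (fun l => hr q l)]
    apply finsum_eq_sum_of_support_subset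
    intro l hsup
    simp only [Function.mem_support, ne_eq] at hsup
    by_contra hmem
    apply hsup
    refine Finset.sum_eq_zero fun r _ => Finset.sum_eq_zero fun s _ => ?_
    exact hzero q l r s (by right; left; simpa using hmem)
  rw [finsum_congr (fun q => hl q)]
  rw [GS]
  apply finsum_eq_sum_of_support_subset
  intro q hsup
  simp only [Function.mem_support, ne_eq] at hsup
  by_contra hmem
  apply hsup
  refine Finset.sum_eq_zero fun l _ => Finset.sum_eq_zero fun r _ =>
    Finset.sum_eq_zero fun s _ => ?_
  exact hzero q l r s (by left; simpa using hmem)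


end

/-- explicit expression for x_{2n+2} in terms of (x_1, x_2). -/
theorem q14_explicit_case1 (x : ℤ → ℝ) (hpos : ∀ n, 0 < x n)
    (heven : ∀ n : ℤ, x (2 * n) = (1 + x (2 * n - 1)) / x (2 * n - 2))
    (hodd : ∀ n : ℤ, x (2 * n + 1) = (1 + x (2 * n) ^ 4) / x (2 * n - 1))
    (n : ℕ) :
    x (2 * (n : ℤ) + 2) =
      ∑ᶠ (q : ℕ), ∑ᶠ (l : ℕ), ∑ᶠ (r : ℕ), ∑ᶠ (s : ℕ), ∑ᶠ (m : ℕ),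
        x 2 ^ (1 + 2 * (n : ℤ) - 4 * ((q : ℤ) + (l : ℤ) + (r : ℤ) + (s : ℤ))) *
        x 1 ^ ((q : ℤ) + (l : ℤ) + (m : ℤ) - (n : ℤ)) *
        ((intMultinomial ((n : ℤ) - q - l) [(q : ℤ) - r, (r : ℤ), (s : ℤ)] *
          intChoose ((q : ℤ) + l - 1) (l : ℤ) *
          intChoose (2 * (r : ℤ) + s + l) (m : ℤ) : ℤ) : ℝ) := by
  rw [sumCollapse5 (x 1) (x 2) (ne_of_gt (hpos 1)) n]
  exact xeqG x hpos heven hodd n
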